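/- Let β ∈ F_ℤ and η ∈ F_ℝ. Then the point β + η belongs to the Voronoi cell Vor_F(β) if and only if for every subset S ⊆ V one has −(1/2)|𝔼(S, V−S)| ≤ Σ_{e ∈ 𝔼(S, V−S)} η(e) ≤ (1/2)|𝔼(S, V−S)|. -/

import Mathlib

open Finset
open scoped Classical

structure Multigraph (V E : Type) where
  tail : E → V
  head : E → V
  loopless : ∀ e, tail e ≠ head e

namespace Multigraph

variable {V E : Type}

/-- The simple graph of adjacency underlying a multigraph. -/
def adjG (G : Multigraph V E) : SimpleGraph V :=
  SimpleGraph.fromRel (fun u v => ∃ e, G.tail e = u ∧ G.head e = v)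

/-- A multigraph is connected if its adjacency graph is. -/
def Conn (G : Multigraph V E) : Prop := G.adjG.Connected

/-- Tail of an oriented edge `(e, b)`. -/
def otail (G : Multigraph V E) (oe : E × Bool) : V :=
  if oe.2 then G.tail oe.1 else G.head oe.1

/-- Head of an oriented edge `(e, b)`. -/
def ohead (G : Multigraph V E) (oe : E × Bool) : V :=
  if oe.2 then G.head oe.1 else G.tail oe.1

/-- The coboundary map `d : C⁰(G,A) → C¹(G,A)`, where `C¹(G,A)` is identified with
`E → A` via a fixed reference orientation of each edge. -/
def dm (G : Multigraph V E) {A : Type} [Ring A] (f : V → A) : E → A :=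
  fun e => f (G.head e) - f (G.tail e)

end Multigraph

/-- Value of an element of `C¹(G,A)` on an oriented edge. -/
def oval {E A : Type} [Neg A] (g : E → A) (oe : E × Bool) : A :=
  if oe.2 then g oe.1 else -g oe.1

variable {V E : Type} [Fintype V] [Fintype E] [DecidableEq V] [DecidableEq E]

/-- The cut space `F_ℝ = d(C⁰(G,ℝ)) ⊆ C¹(G,ℝ)`. -/
def FR (G : Multigraph V E) : Set (E → ℝ) := Set.range (G.dm (A := ℝ))

/-- The cut lattice `F_ℤ`, viewed inside `C¹(G,ℝ)`. -/
def FZr (G : Multigraph V E) : Set (E → ℝ) :=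
  {g | ∃ f : V → ℤ, g = G.dm fun v => (f v : ℝ)}

/-- The Euclidean norm on `C¹(G,ℝ)`. -/
noncomputable def enorm (x : E → ℝ) : ℝ := Real.sqrt (∑ e, x e ^ 2)

/-- The Voronoi cell of `β ∈ F_ℤ` inside `F_ℝ`. -/
noncomputable def VorF (G : Multigraph V E) (β : E → ℝ) : Set (E → ℝ) :=
  {x | x ∈ FR G ∧ ∀ α ∈ FZr G, _root_.enorm (x - β) ≤ _root_.enorm (x - α)}

/-- The sum of `η` over the oriented cut `𝔼(S, V−S)`. -/
def cutSum (G : Multigraph V E) (η : E → ℝ) (S : Finset V) : ℝ :=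
  ∑ e : E,
    (if G.tail e ∈ S ∧ G.head e ∉ S then η e
     else if G.head e ∈ S ∧ G.tail e ∉ S then -η e else 0)

/-- The number `|𝔼(S, V−S)|` of oriented edges from `S` to `V − S`. -/
def cutCard (G : Multigraph V E) (S : Finset V) : ℕ :=
  (univ.filter fun e : E =>
    (G.tail e ∈ S ∧ G.head e ∉ S) ∨ (G.head e ∈ S ∧ G.tail e ∉ S)).card

section St8Aux

def st8ip (x y : E → ℝ) : ℝ := ∑ e, x e * y e

def st8D (G : Multigraph V E) (f : V → ℤ) : E → ℝ := G.dm (fun v => (f v : ℝ))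

def st8ind (S : Finset V) : V → ℤ := fun v => if v ∈ S then 1 else 0

lemma st8ip_neg_right (x y : E → ℝ) : st8ip x (-y) = -st8ip x y := by
  simp [st8ip, mul_neg]

lemma st8ip_neg_neg (y : E → ℝ) : st8ip (-y) (-y) = st8ip y y := by
  simp [st8ip]

lemma st8D_neg (G : Multigraph V E) (f : V → ℤ) : st8D G (-f) = -(st8D G f) := by
  funext e; simp [st8D, Multigraph.dm]; ring

lemma st8_enorm_le_iff (η γ : E → ℝ) :
    _root_.enorm η ≤ _root_.enorm (η - γ) ↔ 2 * st8ip η γ ≤ st8ip γ γ := by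
  unfold _root_.enorm
  rw [Real.sqrt_le_sqrt_iff (by positivity)]
  have h1 : ∑ e, ((η - γ) e) ^ 2
      = (∑ e, η e ^ 2) + ((∑ e, γ e * γ e) - 2 * ∑ e, η e * γ e) := by
    rw [Finset.mul_sum, ← Finset.sum_sub_distrib, ← Finset.sum_add_distrib]
    exact Finset.sum_congr rfl fun e _ => by simp [Pi.sub_apply]; ring
  rw [h1]
  unfold st8ip
  constructor <;> intro h <;> linarith

lemma st8_ipind (G : Multigraph V E) (η : E → ℝ) (S : Finset V) :
    st8ip η (st8D G (st8ind S)) = -cutSum G η S := by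
  unfold st8ip st8D st8ind cutSum Multigraph.dm
  rw [← Finset.sum_neg_distrib]
  refine Finset.sum_congr rfl fun e _ => ?_
  by_cases h1 : G.tail e ∈ S <;> by_cases h2 : G.head e ∈ S <;> simp [h1, h2] <;> ring

lemma st8_ipcard (G : Multigraph V E) (S : Finset V) :
    st8ip (st8D G (st8ind S)) (st8D G (st8ind S)) = (cutCard G S : ℝ) := by
  unfold st8ip st8D st8ind cutCard Multigraph.dm
  rw [Finset.card_filter]
  push_cast
  refine Finset.sum_congr rfl fun e _ => ?_
  by_cases h1 : G.tail e ∈ S <;> by_cases h2 : G.head e ∈ S <;> simp [h1, h2] <;> ring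

set_option linter.unusedSectionVars false

lemma st8main (G : Multigraph V E) [Nonempty V] (η : E → ℝ)
    (hc : ∀ S : Finset V,
      2 * st8ip η (st8D G (st8ind S)) ≤ st8ip (st8D G (st8ind S)) (st8D G (st8ind S))) :
    ∀ f : V → ℤ, 2 * st8ip η (st8D G f) ≤ st8ip (st8D G f) (st8D G f) := by
  suffices h : ∀ (n : ℕ) (m : ℤ) (f : V → ℤ), (∀ v, m ≤ f v) →
      (∑ v, (f v - m)) ≤ (n : ℤ) →
      2 * st8ip η (st8D G f) ≤ st8ip (st8D G f) (st8D G f) by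
    intro f
    set m := univ.inf' univ_nonempty f with hm
    have hmle : ∀ v, m ≤ f v := fun v => Finset.inf'_le _ (mem_univ v)
    refine h (∑ v, (f v - m)).toNat m f hmle ?_
    rw [Int.toNat_of_nonneg (Finset.sum_nonneg fun v _ => by linarith [hmle v])]
  intro n
  induction n with
  | zero =>
    intro m f hm hsum
    have hconst : ∀ v, f v = m := by
      intro v
      by_contra hv
      have h1 : 1 ≤ f v - m := by have := hm v; omega
      have h2 : (0:ℤ) < ∑ v, (f v - m) := by
        calc (0:ℤ) < f v - m := by omega
        _ ≤ ∑ v, (f v - m) :=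
          Finset.single_le_sum (f := fun w => f w - m)
            (fun w _ => by simpa using sub_nonneg.mpr (hm w)) (mem_univ v)
      omega
    have hD : st8D G f = 0 := by
      funext e; simp [st8D, Multigraph.dm, hconst]
    simp [hD, st8ip]
  | succ n ih =>
    intro m f hm hsum
    by_cases hconst : ∀ v, f v = m
    · have hD : st8D G f = 0 := by
        funext e; simp [st8D, Multigraph.dm, hconst]
      simp [hD, st8ip]
    · push_neg at hconst
      set M := univ.sup' univ_nonempty f with hMdef
      have hMle : ∀ v, f v ≤ M := fun v => Finset.le_sup' _ (mem_univ v)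
      have hmM : m < M := by
        obtain ⟨v, hv⟩ := hconst
        have := hm v
        have := hMle v
        omega
      set S := univ.filter (fun v => f v = M) with hSdef
      have hmemS : ∀ v, v ∈ S ↔ f v = M := by
        intro v; simp [hSdef]
      have hSne : S.Nonempty := by
        obtain ⟨v, _, hv⟩ := Finset.exists_mem_eq_sup' univ_nonempty f
        exact ⟨v, (hmemS v).mpr hv.symm⟩
      set g : V → ℤ := fun v => f v - st8ind S v with hgdef
      have hgm : ∀ v, m ≤ g v := by
        intro v
        by_cases hv : v ∈ S <;> simp [hgdef, st8ind, hv]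
        · have := (hmemS v).mp hv; omega
        · exact hm v
      have hsum' : (∑ v, (g v - m)) ≤ (n : ℤ) := by
        have hsplit : ∑ v, (g v - m) = (∑ v, (f v - m)) - S.card := by
          have : ∀ v, g v - m = (f v - m) - st8ind S v := by
            intro v; simp [hgdef]; ring
          rw [Finset.sum_congr rfl fun v _ => this v, Finset.sum_sub_distrib]
          congr 1
          simp [st8ind, Finset.sum_ite_mem]
        have hcard : 1 ≤ (S.card : ℤ) := by
          exact_mod_cast Nat.one_le_iff_ne_zero.mpr (Finset.card_ne_zero_of_mem hSne.choose_spec)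
        push_cast at hsum ⊢
        omega
      have hIH := ih m g hgm hsum'
      have hDf : st8D G f = st8D G g + st8D G (st8ind S) := by
        funext e; simp [st8D, Multigraph.dm, hgdef]; push_cast; ring
      have hcross : 0 ≤ st8ip (st8D G g) (st8D G (st8ind S)) := by
        unfold st8ip
        apply Finset.sum_nonneg
        intro e _
        by_cases h1 : G.tail e ∈ S <;> by_cases h2 : G.head e ∈ S <;>
          simp [st8D, Multigraph.dm, st8ind, hgdef, h1, h2]
        · -- tail ∈ S, head ∉ S
          have ha := (hmemS _).mp h1
          have hb : f (G.head e) ≤ M - 1 := by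
            have := hMle (G.head e)
            have : f (G.head e) ≠ M := fun hh => h2 ((hmemS _).mpr hh)
            omega
          have hbr : (f (G.head e) : ℝ) ≤ (M : ℝ) - 1 := by exact_mod_cast hb
          rw [ha]; push_cast; nlinarith
        · -- tail ∉ S, head ∈ S
          have hb := (hmemS _).mp h2
          have ha : f (G.tail e) ≤ M - 1 := by
            have := hMle (G.tail e)
            have : f (G.tail e) ≠ M := fun hh => h1 ((hmemS _).mpr hh)
            omega
          have har : (f (G.tail e) : ℝ) ≤ (M : ℝ) - 1 := by exact_mod_cast ha
          rw [hb]; push_cast; nlinarith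
      have hexp : st8ip (st8D G f) (st8D G f) =
          st8ip (st8D G g) (st8D G g) + 2 * st8ip (st8D G g) (st8D G (st8ind S))
            + st8ip (st8D G (st8ind S)) (st8D G (st8ind S)) := by
        rw [hDf]
        unfold st8ip
        rw [Finset.mul_sum, ← Finset.sum_add_distrib, ← Finset.sum_add_distrib]
        exact Finset.sum_congr rfl fun e _ => by simp [Pi.add_apply]; ring
      have hlin : st8ip η (st8D G f) =
          st8ip η (st8D G g) + st8ip η (st8D G (st8ind S)) := by
        rw [hDf]
        unfold st8ip
        rw [← Finset.sum_add_distrib]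
        exact Finset.sum_congr rfl fun e _ => by simp [Pi.add_apply]; ring
      linarith [hc S]

end St8Aux

set_option linter.unusedSectionVars false in
/-- for `β ∈ F_ℤ` and `η ∈ F_ℝ`, the point `β + η` belongs to the
Voronoi cell `Vor_F(β)` iff for every `S ⊆ V`,
`−|𝔼(S,V−S)|/2 ≤ Σ_{e ∈ 𝔼(S,V−S)} η_e ≤ |𝔼(S,V−S)|/2`. -/

theorem stmt8 (G : Multigraph V E) (hG : G.Conn) (β : E → ℝ) (hβ : β ∈ FZr G)
    (η : E → ℝ) (hη : η ∈ FR G) :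
    β + η ∈ VorF G β ↔
      ∀ S : Finset V,
        -((cutCard G S : ℝ) / 2) ≤ cutSum G η S ∧ cutSum G η S ≤ (cutCard G S : ℝ) / 2 := by
  have hne : Nonempty V := SimpleGraph.Connected.nonempty hG
  obtain ⟨f₀, hf₀⟩ := hβ
  obtain ⟨g₀, hg₀⟩ := hη
  have hsubβ : (β + η) - β = η := add_sub_cancel_left β η
  have key : β + η ∈ VorF G β ↔
      ∀ f : V → ℤ, 2 * st8ip η (st8D G f) ≤ st8ip (st8D G f) (st8D G f) := by
    constructor
    · intro hmem f
      have hmem2 := hmem.2 (st8D G (f₀ + f)) ⟨f₀ + f, rfl⟩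
      have h2 : (β + η) - st8D G (f₀ + f) = η - st8D G f := by
        funext e
        rw [hf₀]
        simp only [Pi.sub_apply, Pi.add_apply, st8D, Multigraph.dm]
        push_cast; ring
      rw [hsubβ, h2] at hmem2
      exact (st8_enorm_le_iff η (st8D G f)).mp hmem2
    · intro h
      refine ⟨⟨(fun v => (f₀ v : ℝ)) + g₀, ?_⟩, ?_⟩
      · rw [hf₀, ← hg₀]; funext e; simp only [Pi.add_apply, Multigraph.dm]; ring
      · rintro α ⟨fα, rfl⟩
        have h2 : (β + η) - (G.dm fun v => ((fα v : ℤ) : ℝ)) = η - st8D G (fα - f₀) := by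
          funext e
          rw [hf₀]
          simp only [Pi.sub_apply, Pi.add_apply, st8D, Multigraph.dm]
          push_cast; ring
        rw [hsubβ, h2]
        exact (st8_enorm_le_iff η (st8D G (fα - f₀))).mpr (h _)
  rw [key]
  constructor
  · intro h S
    have h1 := h (st8ind S)
    have h2 := h (-(st8ind S))
    rw [st8_ipind, st8_ipcard] at h1
    rw [st8D_neg, st8ip_neg_right, st8ip_neg_neg, st8_ipind, st8_ipcard] at h2
    constructor <;> linarith
  · intro h
    apply st8main G η
    intro S
    rw [st8_ipind, st8_ipcard]
    have := (h S).1
    linarith
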